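/- Let Q be a quad in a binary matroid M. If x and y are elements of Q, then M\x and M\y are isomorphic matroids. -/

import Mathlib

open scoped Matroid

universe u v

namespace Matroid

variable {α : Type u} {β : Type v}

/-- Deletion of a set of elements from a matroid. -/
def Del (M : Matroid α) (D : Set α) : Matroid α := M ↾ (M.E \ D)

/-- Contraction of a set of elements in a matroid. -/
def Con (M : Matroid α) (C : Set α) : Matroid α := (M✶.Del C)✶

/-- A circuit is a minimal dependent set. -/
def IsCircuitM (M : Matroid α) (C : Set α) : Prop :=
  M.Dep C ∧ ∀ ⦃D : Set α⦄, D ⊂ C → M.Indep D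

/-- A cocircuit is a circuit of the dual matroid. -/
def IsCocircuitM (M : Matroid α) (C : Set α) : Prop := M✶.IsCircuitM C

/-- A triangle is a 3-element circuit. -/
def IsTriangle (M : Matroid α) (T : Set α) : Prop := M.IsCircuitM T ∧ T.encard = 3

/-- A triad is a 3-element cocircuit. -/
def IsTriad (M : Matroid α) (T : Set α) : Prop := M.IsCocircuitM T ∧ T.encard = 3

/-- A quad is a 4-element set that is both a circuit and a cocircuit. -/
def IsQuad (M : Matroid α) (Q : Set α) : Prop :=
  M.IsCircuitM Q ∧ M.IsCocircuitM Q ∧ Q.encard = 4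

/-- The rank (in `ℕ∞`) of a set in a matroid: the supremum of the cardinalities
of independent subsets of the set. -/
noncomputable def eRkM (M : Matroid α) (X : Set α) : ℕ∞ :=
  ⨆ I ∈ {I : Set α | M.Indep I ∧ I ⊆ X}, I.encard

/-- `M.ConnBddBy X k` says that the connectivity `λ_M(X) = r(X) + r(E − X) − r(M)`
is at most `k`, phrased without subtraction. -/
def ConnBddBy (M : Matroid α) (X : Set α) (k : ℕ) : Prop :=
  M.eRkM X + M.eRkM (M.E \ X) ≤ M.eRkM M.E + (k : ℕ∞)

/-- `(X, Y)` is a `k`-separation of `M`: a partition of the ground set with both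
sides of size at least `k` and `λ_M(X) ≤ k − 1`. -/
def IsKSep (M : Matroid α) (k : ℕ) (X Y : Set α) : Prop :=
  Disjoint X Y ∧ X ∪ Y = M.E ∧ (k : ℕ∞) ≤ X.encard ∧ (k : ℕ∞) ≤ Y.encard ∧
    M.ConnBddBy X (k - 1)

/-- A matroid is `n`-connected if it has no `k`-separation for any `k < n`. -/
def NConnected (M : Matroid α) (n : ℕ) : Prop :=
  ∀ k : ℕ, 0 < k → k < n → ∀ X Y : Set α, ¬ M.IsKSep k X Y

/-- A matroid is 3-connected if it has no 1- or 2-separation. -/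
def ThreeConnected (M : Matroid α) : Prop := M.NConnected 3

/-- A matroid is 4-connected if it has no 1-, 2- or 3-separation. -/
def FourConnected (M : Matroid α) : Prop := M.NConnected 4

/-- A matroid is `(4, k)`-connected if it is 3-connected and every 3-separation
has a side with at most `k` elements. -/
def FourKConnected (M : Matroid α) (k : ℕ) : Prop :=
  M.ThreeConnected ∧ ∀ X Y : Set α, M.IsKSep 3 X Y →
    X.encard ≤ (k : ℕ∞) ∨ Y.encard ≤ (k : ℕ∞)

/-- A matroid is internally 4-connected if it is (4, 3)-connected. -/
def InternallyFourConnected (M : Matroid α) : Prop := M.FourKConnected 3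

/-- A `(4, 3)`-violator is a 3-separation with both sides of size at least 4. -/
def Violator43 (M : Matroid α) (X Y : Set α) : Prop :=
  M.IsKSep 3 X Y ∧ (4 : ℕ∞) ≤ X.encard ∧ (4 : ℕ∞) ≤ Y.encard

/-- Two matroids are isomorphic if there is a bijection between their ground sets
carrying independent sets to independent sets in both directions. -/
def IsIsoTo (M : Matroid α) (N : Matroid β) : Prop :=
  ∃ e : M.E ≃ N.E, ∀ I : Set M.E,
    M.Indep (Subtype.val '' I) ↔ N.Indep (Subtype.val '' (e '' I))

/-- `N` is a minor of `M` if it is obtained from `M` by contracting a set and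
deleting a disjoint set. -/
def IsMinorOf (N M : Matroid α) : Prop :=
  ∃ C D : Set α, Disjoint C D ∧ C ⊆ M.E ∧ D ⊆ M.E ∧ N = (M.Con C).Del D

/-- `M` has an `N`-minor: a minor of `M` isomorphic to `N`. -/
def HasIsoMinor (M : Matroid α) (N : Matroid β) : Prop :=
  ∃ M₀ : Matroid α, M₀.IsMinorOf M ∧ M₀.IsIsoTo N

/-- `M` has a proper `N`-minor: a proper minor of `M` isomorphic to `N`. -/
def HasProperIsoMinor (M : Matroid α) (N : Matroid β) : Prop :=
  ∃ M₀ : Matroid α, M₀.IsMinorOf M ∧ M₀ ≠ M ∧ M₀.IsIsoTo N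

/-- A matroid is binary if it is representable over `GF(2)`. -/
def IsBinary (M : Matroid α) : Prop :=
  ∃ (ι : Type u) (v : α → ι → ZMod 2), ∀ I : Set α,
    M.Indep I ↔ I ⊆ M.E ∧ LinearIndependent (ZMod 2) (fun x : I => v x)

/-- A 4-fan: an ordering `(a, b, c, d)` of a 4-element set with `{a,b,c}` a
triangle and `{b,c,d}` a triad. -/
def Is4FanOrdering (M : Matroid α) (a b c d : α) : Prop :=
  ({a, b, c, d} : Set α).encard = 4 ∧
    M.IsTriangle {a, b, c} ∧ M.IsTriad {b, c, d}

/-- A 5-fan: an ordering of a 5-element set whose alternating sequence contains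
two triangles. -/
def Is5FanOrdering (M : Matroid α) (a b c d e : α) : Prop :=
  ({a, b, c, d, e} : Set α).encard = 5 ∧
    M.IsTriangle {a, b, c} ∧ M.IsTriad {b, c, d} ∧ M.IsTriangle {c, d, e}

/-- A 5-cofan: an ordering of a 5-element set whose alternating sequence contains
two triads. -/
def Is5CofanOrdering (M : Matroid α) (a b c d e : α) : Prop :=
  ({a, b, c, d, e} : Set α).encard = 5 ∧
    M.IsTriad {a, b, c} ∧ M.IsTriangle {b, c, d} ∧ M.IsTriad {c, d, e}

/-- A fan ordering `(s 0, …, s (n-1))`: the consecutive triples form an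
alternating sequence of triangles and triads. -/
def IsFanOrdering (M : Matroid α) (n : ℕ) (s : ℕ → α) : Prop :=
  3 ≤ n ∧ Set.InjOn s (Set.Iio n) ∧
    ((∀ i : ℕ, i + 3 ≤ n →
        (Even i → M.IsTriangle {s i, s (i + 1), s (i + 2)}) ∧
        (¬ Even i → M.IsTriad {s i, s (i + 1), s (i + 2)})) ∨
     (∀ i : ℕ, i + 3 ≤ n →
        (Even i → M.IsTriad {s i, s (i + 1), s (i + 2)}) ∧
        (¬ Even i → M.IsTriangle {s i, s (i + 1), s (i + 2)})))

/-- The counterexample hypotheses on a pair `(M, N)`. -/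
def CexHyp (M : Matroid α) (N : Matroid β) : Prop :=
  M.IsBinary ∧ N.IsBinary ∧
  M.InternallyFourConnected ∧ N.InternallyFourConnected ∧
  M.HasProperIsoMinor N ∧
  (8 : ℕ∞) ≤ N.E.encard ∧ (11 : ℕ∞) ≤ M.E.encard ∧
  (∀ T : Set α, M.IsTriangle T → ∀ e ∈ T, ¬ (M.Del {e}).HasIsoMinor N) ∧
  (∀ T : Set α, M.IsTriad T → ∀ e ∈ T, ¬ (M.Con {e}).HasIsoMinor N) ∧
  ¬ ∃ M' : Matroid α, M'.IsMinorOf M ∧ M'.InternallyFourConnected ∧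
      M'.HasIsoMinor N ∧
      M'.E.encard + 1 ≤ M.E.encard ∧ M.E.encard ≤ M'.E.encard + 2

end Matroid

open Matroid
section Helpers

open Set Submodule

private lemma zmod2_cases : ∀ c : ZMod 2, c = 0 ∨ c = 1 := by decide

private lemma pi_cancel_left {ι : Type v} (u w : ι → ZMod 2) : u + (u + w) = w := by
  funext i
  exact (by decide : ∀ c d : ZMod 2, c + (c + d) = d) (u i) (w i)

private lemma pi_cancel_right {ι : Type v} (u w : ι → ZMod 2) : w + (u + w) = u := by
  funext i
  exact (by decide : ∀ c d : ZMod 2, d + (c + d) = c) (u i) (w i)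

private lemma pi_eq_of_add_eq_zero {ι : Type v} {u w : ι → ZMod 2} (h : u + w = 0) : u = w := by
  funext i
  have h' : u i + w i = 0 := congrFun h i
  exact (by decide : ∀ c d : ZMod 2, c + d = 0 → c = d) _ _ h'

private lemma mem_span_of_insert_dep {α : Type u} {ι : Type v} {M : Matroid α}
    {v : α → ι → ZMod 2}
    (hv : ∀ I : Set α, M.Indep I ↔ I ⊆ M.E ∧ LinearIndependent (ZMod 2) (fun x : I => v x))
    {s : Set α} {e : α} (hs : M.Indep s) (he : e ∈ M.E) (hes : e ∉ s)
    (hdep : M.Dep (insert e s)) : v e ∈ span (ZMod 2) (v '' s) := by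
  by_contra hns
  exact hdep.not_indep ((hv _).2 ⟨insert_subset he ((hv s).1 hs).1,
    (linearIndepOn_insert hes).2 ⟨((hv s).1 hs).2, hns⟩⟩)

private lemma exists_dual_one {V : Type v} [AddCommGroup V] [Module (ZMod 2) V]
    {W : Submodule (ZMod 2) V} {u : V} (hu : u ∉ W) :
    ∃ φ : V →ₗ[ZMod 2] ZMod 2, (∀ w ∈ W, φ w = 0) ∧ φ u = 1 := by
  haveI : Fact (Nat.Prime 2) := ⟨Nat.prime_two⟩
  have h1 : ¬ (∀ φ : Module.Dual (ZMod 2) V, φ ∈ W.dualAnnihilator → φ u = 0) := by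
    rw [Subspace.forall_mem_dualAnnihilator_apply_eq_zero_iff]; exact hu
  push_neg at h1
  obtain ⟨φ, hφW, hφu⟩ := h1
  rcases zmod2_cases (φ u) with h0 | h0
  · exact absurd h0 hφu
  · exact ⟨φ, fun w hw => (Submodule.mem_dualAnnihilator φ).mp hφW w hw, h0⟩

end Helpers

/-- deleting any two elements of a quad of a binary matroid gives
isomorphic matroids. -/
theorem statement_5 {α : Type u} (M : Matroid α) (hMbin : M.IsBinary)
    (Q : Set α) (hQ : M.IsQuad Q) (x y : α) (hx : x ∈ Q) (hy : y ∈ Q) :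
    (M.Del {x}).IsIsoTo (M.Del {y}) := by
  classical
  obtain ⟨ι, v, hv⟩ := hMbin
  by_cases hxy : x = y
  · subst hxy
    exact ⟨Equiv.refl _, fun I => by simp⟩
  obtain ⟨hQc, hQcc, hQ4⟩ := hQ
  have hQE : Q ⊆ M.E := hQc.1.subset_ground
  -- extract the other two elements a b of the quad
  have hxyQ : ({x, y} : Set α) ⊆ Q := by rintro z (rfl | rfl); exacts [hx, hy]
  have hS2 : (Q \ {x, y}).encard = 2 := by
    have h := Set.encard_diff_add_encard_of_subset hxyQ
    rw [Set.encard_pair hxy, hQ4] at h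
    have h' : (Q \ {x, y}).encard + 2 = 2 + 2 := by rw [h]; norm_num
    exact WithTop.add_right_cancel (WithTop.coe_ne_top (a := (2 : ℕ))) h'
  obtain ⟨a, b, hab, hSab⟩ := Set.encard_eq_two.mp hS2
  have haS : a ∈ Q \ {x, y} := by rw [hSab]; exact Set.mem_insert _ _
  have hbS : b ∈ Q \ {x, y} := by rw [hSab]; simp
  obtain ⟨haQ, haxy⟩ := haS
  obtain ⟨hbQ, hbxy⟩ := hbS
  have hax : a ≠ x := fun h => haxy (by simp [h])
  have hay : a ≠ y := fun h => haxy (by simp [h])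
  have hbx : b ≠ x := fun h => hbxy (by simp [h])
  have hby : b ≠ y := fun h => hbxy (by simp [h])
  have hQeq : Q = {x, y, a, b} := by
    rw [← Set.union_diff_cancel hxyQ, hSab]
    ext z
    simp only [Set.mem_union, Set.mem_insert_iff, Set.mem_singleton_iff]
    tauto
  have hxE : x ∈ M.E := hQE hx
  have hyE : y ∈ M.E := hQE hy
  have haE : a ∈ M.E := hQE haQ
  have hbE : b ∈ M.E := hQE hbQ
  -- circuit: proper subsets are independent
  have hInd : ∀ s : Set α, s ⊂ Q → LinearIndependent (ZMod 2) (fun z : s => v ↑z) :=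
    fun s hs => ((hv s).1 (hQc.2 hs)).2
  -- derive the linear relation v x + v y + v a + v b = 0
  have hQdep : ¬ LinearIndependent (ZMod 2) (v ∘ (Subtype.val : Q → α)) := fun h =>
    hQc.1.not_indep ((hv Q).2 ⟨hQE, h⟩)
  obtain ⟨l, hlsup, hltot, hlne⟩ := linearDepOn_iff'.mp hQdep
  have hsupQ : ∀ e ∈ Q, l e ≠ 0 := by
    intro e heQ hl0
    refine hlne ?_
    have hss : Q \ {e} ⊂ Q := Set.sdiff_singleton_ssubset.mpr heQ
    refine linearIndepOn_iff.mp (hInd _ hss) l ?_ hltot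
    rw [Finsupp.mem_supported]
    intro z hz
    refine ⟨(Finsupp.mem_supported _ l).mp hlsup hz, ?_⟩
    simp only [Set.mem_singleton_iff]
    rintro rfl
    exact (Finsupp.mem_support_iff.mp hz) hl0
  have hl1 : ∀ e ∈ Q, l e = 1 := fun e he => (zmod2_cases (l e)).resolve_left (hsupQ e he)
  have hsupp_eq : l.support = ({x, y, a, b} : Finset α) := by
    apply Finset.ext
    intro z
    simp only [Finsupp.mem_support_iff, Finset.mem_insert, Finset.mem_singleton]
    constructor
    · intro hz
      have hzQ : z ∈ Q := (Finsupp.mem_supported _ l).mp hlsup (Finsupp.mem_support_iff.mpr hz)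
      rw [hQeq] at hzQ
      simpa using hzQ
    · intro hz
      apply hsupQ
      rw [hQeq]
      simpa using hz
  have hsum : v x + (v y + (v a + v b)) = 0 := by
    have hxm : x ∉ ({y, a, b} : Finset α) := by simp [hxy, Ne.symm hax, Ne.symm hbx]
    have hym : y ∉ ({a, b} : Finset α) := by simp [Ne.symm hay, Ne.symm hby]
    rw [Finsupp.linearCombination_apply, Finsupp.sum, hsupp_eq] at hltot
    rw [Finset.sum_insert hxm, Finset.sum_insert hym, Finset.sum_insert (by simp [hab]),
      Finset.sum_singleton, hl1 x hx, hl1 y hy, hl1 a haQ, hl1 b hbQ, one_smul, one_smul,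
      one_smul, one_smul] at hltot
    exact hltot
  have hs : v x + v y = v a + v b := by
    apply pi_eq_of_add_eq_zero
    rw [add_assoc]
    exact hsum
  -- cocircuit: v x and v y are not in the span of the complement's vectors
  have hkey : ∀ z ∈ Q, v z ∉ Submodule.span (ZMod 2) (v '' (M.E \ Q)) := by
    intro z hz hmem
    have hss : Q \ {z} ⊂ Q := Set.sdiff_singleton_ssubset.mpr hz
    have hco : M.Coindep (Q \ {z}) := hQcc.2 hss
    obtain ⟨B, hB, hBsub⟩ :=
      (Matroid.coindep_iff_exists ((Set.diff_subset).trans hQE)).mp hco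
    have hspanB : ∀ e ∈ M.E, v e ∈ Submodule.span (ZMod 2) (v '' B) := by
      intro e he
      by_cases heB : e ∈ B
      · exact Submodule.subset_span (Set.mem_image_of_mem v heB)
      · exact mem_span_of_insert_dep hv hB.indep he heB (hB.insert_dep ⟨he, heB⟩)
    have hBH : v '' B ⊆ (Submodule.span (ZMod 2) (v '' (M.E \ Q)) : Set (ι → ZMod 2)) := by
      rintro _ ⟨e, heB, rfl⟩
      obtain ⟨heE, heQz⟩ := hBsub heB
      by_cases heQ : e ∈ Q
      · have hez : e = z := by
          by_contra hne
          exact heQz ⟨heQ, hne⟩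
        rw [hez]
        exact hmem
      · exact Submodule.subset_span ⟨e, ⟨heE, heQ⟩, rfl⟩
    have hspanH : ∀ e ∈ M.E, v e ∈ Submodule.span (ZMod 2) (v '' (M.E \ Q)) := fun e he =>
      Submodule.span_le.mpr hBH (hspanB e he)
    obtain ⟨I, hI⟩ := M.exists_isBasis (M.E \ Q) Set.diff_subset
    have hIH : I ⊆ M.E \ Q := hI.subset
    have hspanI : Submodule.span (ZMod 2) (v '' (M.E \ Q)) ≤
        Submodule.span (ZMod 2) (v '' I) := by
      rw [Submodule.span_le]
      rintro _ ⟨e, heH, rfl⟩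
      by_cases heI : e ∈ I
      · exact Submodule.subset_span (Set.mem_image_of_mem v heI)
      · exact mem_span_of_insert_dep hv hI.indep heH.1 heI (hI.insert_dep ⟨heH, heI⟩)
    have hIbase : M.IsBase I := by
      refine hI.indep.isBase_of_forall_insert ?_
      rintro e ⟨heE, heI⟩
      intro hind
      have hli := ((hv _).1 hind).2
      have hnot : v e ∉ Submodule.span (ZMod 2) (v '' I) :=
        ((linearIndepOn_insert heI).mp hli).2
      exact hnot (hspanI (hspanH e heE))
    exact hQcc.1.not_indep ((Matroid.coindep_iff_exists hQE).mpr ⟨I, hIbase, hIH⟩)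
  -- build the functional f with f (v x) = f (v y) = 1 vanishing on the complement
  obtain ⟨φ1, hφ1W, hφ1x⟩ := exists_dual_one (hkey x hx)
  obtain ⟨φ2, hφ2W, hφ2y⟩ := exists_dual_one (hkey y hy)
  obtain ⟨f, hfW, hfx, hfy⟩ : ∃ f : (ι → ZMod 2) →ₗ[ZMod 2] ZMod 2,
      (∀ w ∈ Submodule.span (ZMod 2) (v '' (M.E \ Q)), f w = 0) ∧
      f (v x) = 1 ∧ f (v y) = 1 := by
    rcases zmod2_cases (φ1 (v y)) with h1 | h1
    · rcases zmod2_cases (φ2 (v x)) with h2 | h2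
      · refine ⟨φ1 + φ2, fun w hw => ?_, ?_, ?_⟩
        · simp [hφ1W w hw, hφ2W w hw]
        · simp [hφ1x, h2]
        · simp [h1, hφ2y]
      · exact ⟨φ2, hφ2W, h2, hφ2y⟩
    · exact ⟨φ1, hφ1W, hφ1x, h1⟩
  have hfH : ∀ e ∈ M.E, e ∉ Q → f (v e) = 0 := fun e he hne =>
    hfW _ (Submodule.subset_span ⟨e, ⟨he, hne⟩, rfl⟩)
  -- the linear involution T
  set T : (ι → ZMod 2) →ₗ[ZMod 2] (ι → ZMod 2) :=
    LinearMap.id + LinearMap.smulRight f (v x + v y) with hTdef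
  have hTapp : ∀ u, T u = u + f u • (v x + v y) := fun u => rfl
  have hfs : f (v x + v y) = 0 := by rw [map_add, hfx, hfy]; decide
  have hTT : ∀ u, T (T u) = u := by
    intro u
    rw [hTapp, hTapp, map_add, map_smul, hfs, smul_eq_mul, mul_zero, add_zero,
      add_assoc, ← add_smul]
    rw [(by decide : ∀ c : ZMod 2, c + c = 0) (f u)]
    rw [zero_smul, add_zero]
  have hTinj : LinearMap.ker T = ⊥ :=
    LinearMap.ker_eq_bot.mpr (Function.LeftInverse.injective hTT)
  have hTx : T (v x) = v y := by
    rw [hTapp, hfx, one_smul]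
    exact pi_cancel_left _ _
  have hTy : T (v y) = v x := by
    rw [hTapp, hfy, one_smul]
    exact pi_cancel_right _ _
  have hfab : f (v b) = f (v a) := by
    have h0 : f (v a) + f (v b) = 0 := by rw [← map_add, ← hs, hfs]
    exact (by decide : ∀ c d : ZMod 2, c + d = 0 → d = c) _ _ h0
  -- the permutation σ
  obtain ⟨σ, hσv, hσmem⟩ : ∃ σ : α ≃ α,
      (∀ z, z ∈ M.E \ {x} → v (σ z) = T (v z)) ∧
      (∀ z, z ∈ M.E \ {x} ↔ σ z ∈ M.E \ {y}) := by
    have hnotQ : ∀ z, z ∈ M.E → z ≠ x → z ≠ y → z ≠ a → z ≠ b → T (v z) = v z := by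
      intro z hzE h1 h2 h3 h4
      have hzQ : z ∉ Q := by rw [hQeq]; simp [h1, h2, h3, h4]
      rw [hTapp, hfH z hzE hzQ, zero_smul, add_zero]
    rcases zmod2_cases (f (v a)) with hc | hc
    · -- f (v a) = 0 : σ = swap x y
      have hTa : T (v a) = v a := by rw [hTapp, hc, zero_smul, add_zero]
      have hTb : T (v b) = v b := by rw [hTapp, hfab, hc, zero_smul, add_zero]
      refine ⟨Equiv.swap x y, ?_, ?_⟩
      · rintro z ⟨hzE, hzx⟩
        simp only [Set.mem_singleton_iff] at hzx
        rcases eq_or_ne z y with rfl | hzy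
        · rw [Equiv.swap_apply_right, hTy]
        · rw [Equiv.swap_apply_of_ne_of_ne hzx hzy]
          rcases eq_or_ne z a with rfl | hza
          · rw [hTa]
          rcases eq_or_ne z b with rfl | hzb
          · rw [hTb]
          rw [hnotQ z hzE hzx hzy hza hzb]
      · intro z
        rcases eq_or_ne z x with rfl | hzx
        · simp [Equiv.swap_apply_left]
        rcases eq_or_ne z y with rfl | hzy
        · simp [Equiv.swap_apply_right, hxE, hyE, hxy, Ne.symm hxy]
        · rw [Equiv.swap_apply_of_ne_of_ne hzx hzy]
          simp [hzx, hzy]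
    · -- f (v a) = 1 : σ = (swap x y) ∘ (swap a b)
      have hTa : T (v a) = v b := by
        rw [hTapp, hc, one_smul, hs]
        exact pi_cancel_left _ _
      have hTb : T (v b) = v a := by
        rw [hTapp, hfab, hc, one_smul, hs]
        exact pi_cancel_right _ _
      refine ⟨(Equiv.swap x y).trans (Equiv.swap a b), ?_, ?_⟩
      · rintro z ⟨hzE, hzx⟩
        simp only [Set.mem_singleton_iff] at hzx
        rw [Equiv.trans_apply]
        rcases eq_or_ne z y with rfl | hzy
        · rw [Equiv.swap_apply_right, Equiv.swap_apply_of_ne_of_ne (Ne.symm hax) (Ne.symm hbx),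
            hTy]
        rw [Equiv.swap_apply_of_ne_of_ne hzx hzy]
        rcases eq_or_ne z a with rfl | hza
        · rw [Equiv.swap_apply_left, hTa]
        rcases eq_or_ne z b with rfl | hzb
        · rw [Equiv.swap_apply_right, hTb]
        · rw [Equiv.swap_apply_of_ne_of_ne hza hzb, hnotQ z hzE hzx hzy hza hzb]
      · intro z
        rw [Equiv.trans_apply]
        rcases eq_or_ne z x with rfl | hzx
        · rw [Equiv.swap_apply_left, Equiv.swap_apply_of_ne_of_ne (Ne.symm hay) (Ne.symm hby)]
          simp
        rcases eq_or_ne z y with rfl | hzy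
        · rw [Equiv.swap_apply_right, Equiv.swap_apply_of_ne_of_ne (Ne.symm hax) (Ne.symm hbx)]
          simp [hxE, hyE, hxy, Ne.symm hxy]
        rw [Equiv.swap_apply_of_ne_of_ne hzx hzy]
        rcases eq_or_ne z a with rfl | hza
        · rw [Equiv.swap_apply_left]
          simp [haE, hbE, hax, hby]
        rcases eq_or_ne z b with rfl | hzb
        · rw [Equiv.swap_apply_right]
          simp [haE, hbE, hbx, hay]
        · rw [Equiv.swap_apply_of_ne_of_ne hza hzb]
          simp [hzx, hzy]
  -- transfer of independence along σ
  have htrans : ∀ J : Set α, J ⊆ M.E \ {x} → (M.Indep J ↔ M.Indep (σ '' J)) := by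
    intro J hJ
    have hJE : J ⊆ M.E := hJ.trans Set.diff_subset
    have hσJE : σ '' J ⊆ M.E := by
      rintro _ ⟨z, hz, rfl⟩
      exact ((hσmem z).mp (hJ hz)).1
    rw [hv J, hv (σ '' J)]
    simp only [hJE, hσJE, true_and]
    rw [← linearIndependent_equiv (Equiv.Set.image σ J σ.injective)
      (f := fun z : ↥(σ '' J) => v ↑z)]
    have hcomp : ((fun z : ↥(σ '' J) => v ↑z) ∘ (Equiv.Set.image σ J σ.injective)) =
        fun z : J => T (v ↑z) := by
      funext z
      simp only [Function.comp_apply, Equiv.Set.image_apply]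
      exact hσv z (hJ z.2)
    rw [hcomp]
    exact (LinearMap.linearIndependent_iff T hTinj).symm
  -- assemble the isomorphism
  set e : ↥((M.Del {x}).E) ≃ ↥((M.Del {y}).E) := Equiv.subtypeEquiv σ hσmem with he
  refine ⟨e, ?_⟩
  intro I
  have hJsub : Subtype.val '' I ⊆ M.E \ {x} := Subtype.coe_image_subset _ _
  have himg : Subtype.val '' (e '' I) = σ '' (Subtype.val '' I) := by
    rw [Set.image_image, Set.image_image]
    rfl
  show (M ↾ (M.E \ {x})).Indep _ ↔ (M ↾ (M.E \ {y})).Indep _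
  rw [Matroid.restrict_indep_iff, Matroid.restrict_indep_iff, himg]
  constructor
  · rintro ⟨hind, hsub⟩
    refine ⟨(htrans _ hsub).mp hind, ?_⟩
    rintro _ ⟨z, hz, rfl⟩
    exact (hσmem z).mp (hsub hz)
  · rintro ⟨hind, hsub⟩
    exact ⟨(htrans _ hJsub).mpr hind, hJsub⟩
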